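/- For α > 2, θ > 0, λ > 0, and h ≥ 0, the coverage probability for closest BS association with elevated base stations satisfies P_cov^C(θ,λ) = 2πλ·∫_0^∞ exp(-πλ·ψ(θ)·(r² + h²))·e^(-πλr²)·r dr = (1/(ψ(θ)+1))·exp(-πλh²·ψ(θ)), where ψ(z) = (2z/(α-2))·₂F₁(1, 1 - 2/α, 2 - 2/α, -z). -/

import Mathlib

open Real MeasureTheory Set

/-- Gauss hypergeometric function `₂F₁(a,b;c;z)` via Euler's integral representation. -/
noncomputable def hyp2F1 (a b c z : ℝ) : ℝ :=
  (Real.Gamma c / (Real.Gamma b * Real.Gamma (c - b))) *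
    ∫ t in Ioo (0 : ℝ) 1, t ^ (b - 1) * (1 - t) ^ (c - b - 1) * (1 - z * t) ^ (-a)

noncomputable def psi (α z : ℝ) : ℝ :=
  (2 * z / (α - 2)) * hyp2F1 1 (1 - 2 / α) (2 - 2 / α) (-z)

open Filter in
lemma int_gauss (c : ℝ) (hc : 0 < c) :
    ∫ r in Ioi (0:ℝ), Real.exp (-(c * r ^ 2)) * r = 1 / (2 * c) := by
  have hderiv : ∀ x ∈ Ici (0:ℝ), HasDerivAt (fun r => -Real.exp (-(c * r^2)) / (2*c))
      (Real.exp (-(c * x^2)) * x) x := by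
    intro x _
    have h1 : HasDerivAt (fun r : ℝ => -(c * r^2)) (-(c * (2*x))) x := by
      have := ((hasDerivAt_pow 2 x).const_mul c).neg
      exact this.congr_deriv (by norm_num)
    have h2 := (Real.hasDerivAt_exp (-(c * x^2))).comp x h1
    have h3 := h2.neg.div_const (2*c)
    refine h3.congr_deriv ?_
    field_simp
  have hint : IntegrableOn (fun x => Real.exp (-(c * x^2)) * x) (Ioi 0) := by
    have := (integrable_mul_exp_neg_mul_sq hc).integrableOn (s := Ioi (0:ℝ))
    simpa [mul_comm, neg_mul] using this
  have htend : Filter.Tendsto (fun x => -Real.exp (-(c * x^2)) / (2*c)) atTop (nhds 0) := by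
    have h1 : Tendsto (fun x : ℝ => -(c * x^2)) atTop atBot := by
      have h0 : Tendsto (fun x : ℝ => c * x ^ 2) atTop atTop :=
        (tendsto_pow_atTop (by norm_num)).const_mul_atTop hc
      exact tendsto_neg_atTop_atBot.comp h0
    have h2 := Real.tendsto_exp_atBot.comp h1
    have := (h2.neg).div_const (2*c)
    simpa using this
  have := integral_Ioi_of_hasDerivAt_of_tendsto' hderiv hint htend
  rw [this]
  norm_num
  ring

lemma psi_nonneg (α θ : ℝ) (hα : 2 < α) (hθ : 0 < θ) : 0 ≤ psi α θ := by
  have h2α : 0 < 2 / α := by positivity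
  have h2α1 : 2 / α < 1 := by
    rw [div_lt_one (by linarith)]; linarith
  have hb : 0 < 1 - 2 / α := by linarith
  have hcpos : 0 < 2 - 2 / α := by linarith
  have hfac : 0 ≤ 2 * θ / (α - 2) := by
    apply div_nonneg <;> linarith
  have hG : 0 ≤ Real.Gamma (2 - 2 / α) / (Real.Gamma (1 - 2 / α) * Real.Gamma (2 - 2 / α - (1 - 2 / α))) := by
    have g1 := Real.Gamma_pos_of_pos hcpos
    have g2 := Real.Gamma_pos_of_pos hb
    have g3 : (0:ℝ) < Real.Gamma (2 - 2 / α - (1 - 2 / α)) :=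
      Real.Gamma_pos_of_pos (by linarith)
    positivity
  have hI : 0 ≤ ∫ t in Ioo (0 : ℝ) 1,
      t ^ (1 - 2 / α - 1) * (1 - t) ^ (2 - 2 / α - (1 - 2 / α) - 1) * (1 - (-θ) * t) ^ (-(1:ℝ)) := by
    apply setIntegral_nonneg measurableSet_Ioo
    intro t ht
    have h1 : (0:ℝ) < t ^ (1 - 2 / α - 1) := Real.rpow_pos_of_pos ht.1 _
    have h2 : (0:ℝ) < (1 - t) ^ (2 - 2 / α - (1 - 2 / α) - 1) :=
      Real.rpow_pos_of_pos (by linarith [ht.2]) _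
    have h3 : (0:ℝ) < (1 - (-θ) * t) ^ (-(1:ℝ)) := by
      apply Real.rpow_pos_of_pos
      nlinarith [ht.1]
    positivity
  unfold psi hyp2F1
  exact mul_nonneg hfac (mul_nonneg hG hI)

theorem coverage_closest_elevated (α θ lam h : ℝ)
    (hα : 2 < α) (hθ : 0 < θ) (hlam : 0 < lam) (hh : 0 ≤ h) :
    2 * π * lam *
      ∫ r in Ioi (0 : ℝ),
        Real.exp (-(π * lam * psi α θ * (r ^ 2 + h ^ 2))) * Real.exp (-(π * lam * r ^ 2)) * r
      = (1 / (psi α θ + 1)) * Real.exp (-(π * lam * h ^ 2 * psi α θ)) := by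
  set A := psi α θ with hA
  have hAnn : 0 ≤ A := psi_nonneg α θ hα hθ
  have hc : 0 < π * lam * (A + 1) := by positivity
  have key : (fun r : ℝ => Real.exp (-(π * lam * A * (r ^ 2 + h ^ 2))) * Real.exp (-(π * lam * r ^ 2)) * r)
      = fun r => Real.exp (-(π * lam * h ^ 2 * A)) * (Real.exp (-(π * lam * (A + 1) * r ^ 2)) * r) := by
    funext r
    rw [← Real.exp_add, ← mul_assoc, ← Real.exp_add]
    congr 2
    ring
  rw [key, integral_const_mul, int_gauss _ hc]
  have hπ : π ≠ 0 := Real.pi_ne_zero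
  have hl : lam ≠ 0 := ne_of_gt hlam
  have hA1 : A + 1 ≠ 0 := by positivity
  field_simp
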